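/- For every n ≥ 1, the Colless index of the maximally balanced tree with n leaves equals the minimum Colless index over all rooted bifurcating trees with n leaves. -/
import Mathlib


inductive BTree where
  | leaf : BTree
  | node : BTree → BTree → BTree
deriving DecidableEq

def BTree.leaves : BTree → ℕ
  | .leaf => 1
  | .node l r => l.leaves + r.leaves

def BTree.colless : BTree → ℕ
  | .leaf => 0
  | .node l r => l.colless + r.colless + (max l.leaves r.leaves - min l.leaves r.leaves)

/-- The maximally balanced bifurcating tree with `n` leaves:
`mb n = (mb ⌈n/2⌉, mb ⌊n/2⌋)` for `n ≥ 2`. -/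
def mb (n : ℕ) : BTree :=
  if h : n ≤ 1 then BTree.leaf
  else BTree.node (mb ((n + 1) / 2)) (mb (n / 2))
termination_by n
decreasing_by all_goals omega

lemma mb_small {n : ℕ} (h : n ≤ 1) : mb n = BTree.leaf := by rw [mb]; simp [h]

lemma mb_leaves : ∀ n : ℕ, (mb n).leaves = max n 1 := by
  intro n
  induction n using Nat.strong_induction_on with
  | _ n ih =>
    by_cases h : n ≤ 1
    · rw [mb_small h, BTree.leaves]; omega
    · rw [mb]
      simp only [h, dite_false, BTree.leaves]
      rw [ih ((n+1)/2) (by omega), ih (n/2) (by omega)]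
      omega

lemma F_rec {n : ℕ} (h : 2 ≤ n) :
    (mb n).colless = (mb ((n+1)/2)).colless + (mb (n/2)).colless + n % 2 := by
  conv_lhs => rw [mb]
  have h' : ¬ n ≤ 1 := by omega
  simp only [h', dite_false, BTree.colless, mb_leaves]
  omega

lemma F_even (a : ℕ) : (mb (2*a)).colless = 2 * (mb a).colless := by
  rcases Nat.lt_or_ge a 1 with h | h
  · interval_cases a; simp [mb_small, BTree.colless]
  rcases Nat.lt_or_ge a 2 with h2 | h2
  · interval_cases a
    rw [F_rec (by norm_num)]
    norm_num [mb_small, BTree.colless]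
  have := F_rec (n := 2*a) (by omega)
  have e1 : (2*a+1)/2 = a := by omega
  have e2 : (2*a)/2 = a := by omega
  rw [e1, e2] at this
  omega

lemma F_odd {a : ℕ} (h : 1 ≤ a) :
    (mb (2*a+1)).colless = (mb (a+1)).colless + (mb a).colless + 1 := by
  have := F_rec (n := 2*a+1) (by omega)
  have e1 : (2*a+1+1)/2 = a+1 := by omega
  have e2 : (2*a+1)/2 = a := by omega
  rw [e1, e2] at this
  omega

lemma F_one : (mb 1).colless = 0 := by rw [mb_small (by norm_num)]; rfl

lemma F_zero : (mb 0).colless = 0 := by rw [mb_small (by norm_num)]; rfl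

lemma key : ∀ n a b : ℕ, a + b ≤ n → b ≤ a →
    (mb (a+b)).colless ≤ (mb a).colless + (mb b).colless + (a - b) := by
  intro n
  induction n with
  | zero =>
    intro a b hab hba
    have : a = 0 ∧ b = 0 := by omega
    obtain ⟨rfl, rfl⟩ := this
    simp
  | succ n ih =>
    intro a b hab hba
    rcases Nat.eq_zero_or_pos b with rfl | hb
    · rw [Nat.add_zero, F_zero]; omega
    rcases eq_or_lt_of_le hba with rfl | hlt
    · have : b + b = 2 * b := by ring
      rw [this, F_even]; omega
    -- now 1 ≤ b < a
    rcases Nat.even_or_odd a with ⟨s, hs⟩ | ⟨s, hs⟩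
    · -- a = 2s
      have hs' : a = 2 * s := by omega
      rcases Nat.even_or_odd b with ⟨t, ht⟩ | ⟨t, ht⟩
      · -- b = 2t, t ≥ 1, s > t
        have ht' : b = 2 * t := by omega
        have h1 := ih s t (by omega) (by omega)
        have e : a + b = 2 * (s + t) := by omega
        rw [e, F_even, hs', ht', F_even, F_even]
        omega
      · -- b = 2t+1
        have ht' : b = 2 * t + 1 := by omega
        rcases Nat.eq_zero_or_pos t with rfl | htpos
        · -- b = 1
          have hb1 : b = 1 := by omega
          have hspos : 1 ≤ s := by omega
          have h1 := ih s 1 (by omega) (by omega)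
          have e : a + b = 2 * s + 1 := by omega
          rw [e, F_odd hspos, hs', F_even, hb1, F_one]
          rw [F_one] at h1
          omega
        · have h1 := ih s (t+1) (by omega) (by omega)
          have h2 := ih s t (by omega) (by omega)
          have e : a + b = 2 * (s + t) + 1 := by omega
          have e1 : s + (t+1) = s + t + 1 := by ring
          rw [e1] at h1
          rw [e, F_odd (by omega), hs', ht', F_even, F_odd htpos]
          omega
    · -- a = 2s+1
      have hs' : a = 2 * s + 1 := by omega
      have hspos : 1 ≤ s := by
        rcases Nat.even_or_odd b with ⟨t, ht⟩ | ⟨t, ht⟩ <;> omega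
      rcases Nat.even_or_odd b with ⟨t, ht⟩ | ⟨t, ht⟩
      · -- b = 2t, t ≥ 1
        have ht' : b = 2 * t := by omega
        have h1 := ih (s+1) t (by omega) (by omega)
        have h2 := ih s t (by omega) (by omega)
        have e : a + b = 2 * (s + t) + 1 := by omega
        have e1 : s + 1 + t = s + t + 1 := by ring
        rw [e1] at h1
        rw [e, F_odd (by omega), hs', ht', F_even, F_odd hspos]
        omega
      · -- b = 2t+1
        have ht' : b = 2 * t + 1 := by omega
        rcases Nat.eq_zero_or_pos t with rfl | htpos
        · -- b = 1
          have hb1 : b = 1 := by omega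
          have h1 := ih s 1 (by omega) (by omega)
          have e : a + b = 2 * (s + 1) := by omega
          rw [e, F_even, hs', hb1, F_odd hspos, F_one]
          rw [F_one] at h1
          omega
        · have h1 := ih (s+1) t (by omega) (by omega)
          have h2 := ih s (t+1) (by omega) (by omega)
          have e : a + b = 2 * (s + t + 1) := by omega
          have e1 : s + 1 + t = s + t + 1 := by ring
          have e2 : s + (t + 1) = s + t + 1 := by ring
          rw [e1] at h1
          rw [e2] at h2
          rw [e, F_even, hs', ht', F_odd hspos, F_odd htpos]
          omega

lemma lb : ∀ T : BTree, (mb T.leaves).colless ≤ T.colless := by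
  intro T
  induction T with
  | leaf => rw [BTree.leaves, F_one, BTree.colless]
  | node l r ihl ihr =>
    rw [BTree.leaves, BTree.colless]
    rcases le_total r.leaves l.leaves with h | h
    · have := key (l.leaves + r.leaves) l.leaves r.leaves le_rfl h
      omega
    · have := key (l.leaves + r.leaves) r.leaves l.leaves (by omega) h
      rw [Nat.add_comm r.leaves l.leaves] at this
      omega

theorem maxBalanced_colless_isLeast (n : ℕ) (hn : 1 ≤ n) :
    IsLeast {k : ℕ | ∃ T : BTree, T.leaves = n ∧ T.colless = k} (mb n).colless := by
  constructor
  · exact ⟨mb n, by rw [mb_leaves]; omega, rfl⟩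
  · rintro k ⟨T, hT, rfl⟩
    have := lb T
    rwa [hT] at this
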